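/- Let n ≥ 1 and let G be a positive definite Hermitian n×n complex matrix. Then the function Φ_G(A) := −log(Re tr(A⁻¹ G)) is concave on the convex set of positive definite Hermitian n×n complex matrices: for all positive definite Hermitian matrices A and B and every t ∈ [0,1], the matrix t•A + (1−t)•B is positive definite Hermitian and Φ_G(t•A + (1−t)•B) ≥ t·Φ_G(A) + (1−t)·Φ_G(B). -/

import Mathlib

open Matrix
open scoped ComplexOrder

namespace PhiGAux

variable {n : ℕ}

lemma smul_posDef {t : ℝ} (ht : 0 < t) {A : Matrix (Fin n) (Fin n) ℂ} (hA : A.PosDef) :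
    (t • A).PosDef := by
  exact hA.smul ht

lemma smul_posSemidef {t : ℝ} (ht : 0 ≤ t) {A : Matrix (Fin n) (Fin n) ℂ}
    (hA : A.PosSemidef) : (t • A).PosSemidef := by
  exact hA.smul ht

lemma posDef_conj {P W : Matrix (Fin n) (Fin n) ℂ} (hP : P.PosDef) (hW : IsUnit W) :
    (Wᴴ * P * W).PosDef := by
  exact hP.conjTranspose_mul_mul_same (Matrix.mulVec_injective_iff_isUnit.mpr hW)

open scoped MatrixOrder in
lemma sqrt_isUnit {Q : Matrix (Fin n) (Fin n) ℂ} (hQ : Q.PosDef) :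
    IsUnit (CFC.sqrt Q) := by
  exact (CFC.isUnit_sqrt_iff Q hQ.posSemidef.nonneg).2 hQ.isUnit

open scoped MatrixOrder in
lemma exists_sqrt {A : Matrix (Fin n) (Fin n) ℂ} (hA : A.PosDef) :
    ∃ S : Matrix (Fin n) (Fin n) ℂ, Sᴴ = S ∧ S * S = A ∧ IsUnit S :=
  ⟨CFC.sqrt A, (CFC.sqrt_nonneg A).posSemidef.1, CFC.sqrt_mul_sqrt_self A hA.posSemidef.nonneg,
    sqrt_isUnit hA⟩

lemma trace_mul_re_pos (hn : 1 ≤ n) {P Q : Matrix (Fin n) (Fin n) ℂ}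
    (hP : P.PosDef) (hQ : Q.PosDef) : 0 < (P * Q).trace.re := by
  obtain ⟨W, hWH, hWW, hWu⟩ := exists_sqrt hQ
  have hpos : (Wᴴ * P * W).PosDef := posDef_conj hP hWu
  have heq : (P * Q).trace = (Wᴴ * P * W).trace := by
    rw [hWH, ← hWW, ← Matrix.mul_assoc, trace_mul_cycle]
  rw [heq]
  have hdiag : ∀ i, 0 < ((Wᴴ * P * W) i i).re := by
    intro i
    have h := hpos.re_dotProduct_pos (x := Pi.single i 1) (by
      simp [Function.ne_iff])
    simpa [dotProduct, mulVec, Pi.single_apply, Finset.sum_ite_eq] using h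
  have hsum : 0 < ∑ i, ((Wᴴ * P * W) i i).re := Finset.sum_pos (fun i _ => hdiag i) (by
    have : Nonempty (Fin n) := Fin.pos_iff_nonempty.mp hn
    exact Finset.univ_nonempty)
  simpa [Matrix.trace, Matrix.diag, Complex.re_sum] using hsum

lemma trace_conj_mul_eq_sum (X Y : Matrix (Fin n) (Fin n) ℂ) :
    (Xᴴ * Y).trace = ∑ j, ∑ i, (starRingEnd ℂ) (X i j) * Y i j := by
  simp [Matrix.trace, Matrix.diag, Matrix.mul_apply, Matrix.conjTranspose_apply]

lemma trace_conj_mul_self_re (X : Matrix (Fin n) (Fin n) ℂ) :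
    (Xᴴ * X).trace.re = ∑ j, ∑ i, ‖X i j‖ ^ 2 := by
  rw [trace_conj_mul_eq_sum]
  rw [Complex.re_sum]
  congr 1; funext j
  rw [Complex.re_sum]
  congr 1; funext i
  rw [mul_comm, Complex.mul_conj]
  simp [Complex.normSq_eq_norm_sq, ← Complex.ofReal_pow]

lemma trace_cauchy_schwarz (X Y : Matrix (Fin n) (Fin n) ℂ) :
    ((Xᴴ * Y).trace.re) ^ 2 ≤ (Xᴴ * X).trace.re * (Yᴴ * Y).trace.re := by
  have habs : ((Xᴴ * Y).trace.re) ^ 2 ≤ (‖(Xᴴ * Y).trace‖) ^ 2 := by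
    have := Complex.abs_re_le_norm ((Xᴴ * Y).trace)
    nlinarith [norm_nonneg ((Xᴴ * Y).trace), abs_nonneg ((Xᴴ * Y).trace).re,
      neg_abs_le ((Xᴴ * Y).trace).re, le_abs_self ((Xᴴ * Y).trace).re]
  refine habs.trans ?_
  have h1 : ‖(Xᴴ * Y).trace‖ ≤
      ∑ j, ∑ i, ‖X i j‖ * ‖Y i j‖ := by
    rw [trace_conj_mul_eq_sum]
    refine (norm_sum_le _ _).trans ?_
    refine Finset.sum_le_sum fun j _ => ?_
    refine (norm_sum_le _ _).trans ?_
    refine Finset.sum_le_sum fun i _ => ?_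
    simp [_root_.map_mul]
  have h2 : (∑ j, ∑ i, ‖X i j‖ * ‖Y i j‖) ^ 2 ≤
      (∑ j, ∑ i, ‖X i j‖ ^ 2) * (∑ j, ∑ i, ‖Y i j‖ ^ 2) := by
    have := Finset.sum_mul_sq_le_sq_mul_sq (Finset.univ : Finset (Fin n × Fin n))
      (fun p => ‖X p.2 p.1‖) (fun p => ‖Y p.2 p.1‖)
    simpa [Fintype.sum_prod_type] using this
  calc ‖(Xᴴ * Y).trace‖ ^ 2
      ≤ (∑ j, ∑ i, ‖X i j‖ * ‖Y i j‖) ^ 2 := by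
        apply pow_le_pow_left₀ (norm_nonneg _) h1
    _ ≤ _ := by rw [trace_conj_mul_self_re, trace_conj_mul_self_re]; exact h2

/-- The key Cauchy–Schwarz estimate `(tr C⁻¹G)² ≤ tr(C⁻¹AC⁻¹G) · tr(A⁻¹G)`. -/
lemma key_cs {C A G : Matrix (Fin n) (Fin n) ℂ}
    (hC : C.PosDef) (hA : A.PosDef) (hG : G.PosDef) :
    ((C⁻¹ * G).trace.re) ^ 2 ≤
      (C⁻¹ * A * (C⁻¹ * G)).trace.re * (A⁻¹ * G).trace.re := by
  obtain ⟨S, hSH, hS2, hSu⟩ := exists_sqrt hA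
  obtain ⟨W, hWH, hW2, hWu⟩ := exists_sqrt hG
  have hSS : S * S⁻¹ = 1 := mul_nonsing_inv _ (isUnit_iff_isUnit_det _ |>.1 hSu)
  have hCinvH : (C⁻¹)ᴴ = C⁻¹ := hC.inv.1
  have hSinv2 : S⁻¹ * S⁻¹ = A⁻¹ := by
    rw [← Matrix.mul_inv_rev, hS2]
  have hSinvH : (S⁻¹)ᴴ = S⁻¹ := by
    rw [Matrix.conjTranspose_nonsing_inv, hSH]
  set X := S * C⁻¹ * W with hXdef
  set Y := S⁻¹ * W with hYdef
  have h1 : (Xᴴ * Y).trace = (C⁻¹ * G).trace := by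
    have : Xᴴ * Y = W * C⁻¹ * W := by
      rw [hXdef, hYdef, Matrix.conjTranspose_mul, Matrix.conjTranspose_mul,
        hSH, hWH, hCinvH]
      simp only [Matrix.mul_assoc]
      rw [← Matrix.mul_assoc S S⁻¹, hSS, Matrix.one_mul]
    rw [this, trace_mul_cycle, hW2, trace_mul_comm]
  have h2 : (Xᴴ * X).trace = (C⁻¹ * A * (C⁻¹ * G)).trace := by
    have : Xᴴ * X = W * (C⁻¹ * A * C⁻¹) * W := by
      rw [hXdef, Matrix.conjTranspose_mul, Matrix.conjTranspose_mul, hSH, hWH, hCinvH]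
      simp only [Matrix.mul_assoc]
      rw [← Matrix.mul_assoc S S, hS2]
    rw [this, trace_mul_cycle, hW2, trace_mul_comm]
    congr 1
    simp only [Matrix.mul_assoc]
  have h3 : (Yᴴ * Y).trace = (A⁻¹ * G).trace := by
    have : Yᴴ * Y = W * A⁻¹ * W := by
      rw [hYdef, Matrix.conjTranspose_mul, hSinvH, hWH]
      simp only [Matrix.mul_assoc]
      rw [← Matrix.mul_assoc S⁻¹ S⁻¹, hSinv2]
    rw [this, trace_mul_cycle, hW2, trace_mul_comm]
  have := trace_cauchy_schwarz X Y
  rwa [h1, h2, h3] at this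

end PhiGAux

/-- `Φ_G(A) = -log(Re tr(A⁻¹ G))`. -/
noncomputable def PhiG {n : ℕ} (G A : Matrix (Fin n) (Fin n) ℂ) : ℝ :=
  -Real.log ((A⁻¹ * G).trace.re)

/-- Concavity of `Φ_G(A) = -log(Re tr(A⁻¹ G))` on positive definite Hermitian
matrices (the matrix content of inequality (3.10) of the paper). -/
theorem stmt_1 (n : ℕ) (hn : 1 ≤ n) (G : Matrix (Fin n) (Fin n) ℂ) (hG : G.PosDef)
    (A B : Matrix (Fin n) (Fin n) ℂ) (hA : A.PosDef) (hB : B.PosDef)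
    (t : ℝ) (ht : t ∈ Set.Icc (0 : ℝ) 1) :
    (t • A + (1 - t) • B).PosDef ∧
      t * PhiG G A + (1 - t) * PhiG G B ≤ PhiG G (t • A + (1 - t) • B) := by
  obtain ⟨ht0, ht1⟩ := ht
  rcases eq_or_lt_of_le ht0 with h0 | ht0'
  · -- t = 0
    subst h0
    simp [PhiG]
    exact hB
  rcases eq_or_lt_of_le ht1 with h1 | ht1'
  · -- t = 1
    subst h1
    simp [PhiG]
    exact hA
  -- now 0 < t < 1
  set C := t • A + (1 - t) • B with hCdef
  have hC : C.PosDef :=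
    (PhiGAux.smul_posDef ht0' hA).add_posSemidef
      (PhiGAux.smul_posSemidef (by linarith) hB.posSemidef)
  refine ⟨hC, ?_⟩
  set a := (A⁻¹ * G).trace.re with hadef
  set b := (B⁻¹ * G).trace.re with hbdef
  set c := (C⁻¹ * G).trace.re with hcdef
  have ha : 0 < a := PhiGAux.trace_mul_re_pos hn hA.inv hG
  have hb : 0 < b := PhiGAux.trace_mul_re_pos hn hB.inv hG
  have hc : 0 < c := PhiGAux.trace_mul_re_pos hn hC.inv hG
  set u := (C⁻¹ * A * (C⁻¹ * G)).trace.re with hudef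
  set v := (C⁻¹ * B * (C⁻¹ * G)).trace.re with hvdef
  -- decomposition c = t u + (1-t) v
  have hCC : C⁻¹ * C = 1 :=
    nonsing_inv_mul C (isUnit_iff_isUnit_det C |>.1 hC.isUnit)
  have hdecomp : C⁻¹ * G = t • (C⁻¹ * A * (C⁻¹ * G)) + (1 - t) • (C⁻¹ * B * (C⁻¹ * G)) := by
    calc C⁻¹ * G = (C⁻¹ * C) * (C⁻¹ * G) := by rw [hCC, Matrix.one_mul]
      _ = (t • (C⁻¹ * A) + (1 - t) • (C⁻¹ * B)) * (C⁻¹ * G) := by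
          rw [hCdef]
          congr 1
          rw [Matrix.mul_add, Matrix.mul_smul, Matrix.mul_smul]
      _ = t • (C⁻¹ * A * (C⁻¹ * G)) + (1 - t) • (C⁻¹ * B * (C⁻¹ * G)) := by
          rw [Matrix.add_mul, Matrix.smul_mul, Matrix.smul_mul]
  have hcuv : c = t * u + (1 - t) * v := by
    have := congrArg (fun M : Matrix (Fin n) (Fin n) ℂ => M.trace.re) hdecomp
    simpa [hcdef, hudef, hvdef, trace_add, trace_smul, Complex.real_smul,
      Complex.add_re, Complex.mul_re] using this
  have hcs1 : c ^ 2 ≤ u * a := by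
    simpa [hcdef, hudef, hadef] using PhiGAux.key_cs hC hA hG
  have hcs2 : c ^ 2 ≤ v * b := by
    simpa [hcdef, hvdef, hbdef] using PhiGAux.key_cs hC hB hG
  -- harmonic-mean bound: c * (t/a + (1-t)/b) ≤ 1
  have hu : c ^ 2 / a ≤ u := (div_le_iff₀ ha).2 hcs1
  have hv : c ^ 2 / b ≤ v := (div_le_iff₀ hb).2 hcs2
  have hharm : c * (t / a + (1 - t) / b) ≤ 1 := by
    have h1 : c ^ 2 * (t / a + (1 - t) / b) ≤ c := by
      have : t * (c ^ 2 / a) + (1 - t) * (c ^ 2 / b) ≤ t * u + (1 - t) * v := by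
        have h1t : (0:ℝ) < 1 - t := by linarith
        gcongr
      rw [← hcuv] at this
      calc c ^ 2 * (t / a + (1 - t) / b)
          = t * (c ^ 2 / a) + (1 - t) * (c ^ 2 / b) := by ring
        _ ≤ c := this
    have h2 : c * (c * (t / a + (1 - t) / b)) ≤ c * 1 := by
      rw [mul_one]
      calc c * (c * (t / a + (1 - t) / b)) = c ^ 2 * (t / a + (1 - t) / b) := by ring
        _ ≤ c := h1
    exact le_of_mul_le_mul_left h2 hc
  -- AM–GM: (1/a)^t * (1/b)^(1-t) ≤ t/a + (1-t)/b
  have hamgm : (1 / a) ^ t * (1 / b) ^ (1 - t) ≤ t * (1 / a) + (1 - t) * (1 / b) :=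
    Real.geom_mean_le_arith_mean2_weighted (le_of_lt ht0') (by linarith)
      (one_div_nonneg.mpr ha.le) (one_div_nonneg.mpr hb.le) (by ring)
  have hckey : c ≤ a ^ t * b ^ (1 - t) := by
    have hpow : (1 / a) ^ t * (1 / b) ^ (1 - t) = 1 / (a ^ t * b ^ (1 - t)) := by
      rw [Real.div_rpow zero_le_one ha.le, Real.div_rpow zero_le_one hb.le,
        Real.one_rpow, Real.one_rpow]
      field_simp
    have hq : c * (1 / (a ^ t * b ^ (1 - t))) ≤ 1 := by
      refine le_trans ?_ hharm
      rw [← hpow]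
      have : (1 / a) ^ t * (1 / b) ^ (1 - t) ≤ t / a + (1 - t) / b := by
        simpa [div_eq_mul_inv, mul_comm] using hamgm
      exact mul_le_mul_of_nonneg_left this hc.le
    have hab : 0 < a ^ t * b ^ (1 - t) :=
      mul_pos (Real.rpow_pos_of_pos ha t) (Real.rpow_pos_of_pos hb (1 - t))
    rw [mul_one_div, div_le_one hab] at hq
    exact hq
  -- take logs
  have hlog : Real.log c ≤ t * Real.log a + (1 - t) * Real.log b := by
    have := Real.log_le_log hc hckey
    rwa [Real.log_mul (Real.rpow_pos_of_pos ha t).ne' (Real.rpow_pos_of_pos hb (1 - t)).ne',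
      Real.log_rpow ha, Real.log_rpow hb] at this
  simp only [PhiG, ← hadef, ← hbdef, ← hcdef]
  linarith
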